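/- Let 2 ≤ i < j ≤ m−1, let n ≥ 2, and suppose m < 2j. Then α_j ≱_PS α_i; that is, there exists a profile of n preferences over m candidates at which the i-approval rule α_i is manipulable but the j-approval rule α_j is not manipulable. -/

import Mathlib

/-- A preference order on `m` candidates: `σ c` is the position of candidate `c`
(position `0` is the most preferred). `σ c < σ d` means `c` is strictly preferred to `d`. -/
abbrev Pref (m : ℕ) := Fin m ≃ Fin m

/-- A voting rule for `n` voters and `m` candidates. -/
abbrev Rule (m n : ℕ) := (Fin n → Pref m) → Fin m

/-- Total score of candidate `c` under score vector `s` (indexed by position) at profile `P`. -/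
def score {m n : ℕ} (s : Fin m → ℕ) (P : Fin n → Pref m) (c : Fin m) : ℕ :=
  ∑ v, s (P v c)

/-- The scoring rule with score vector `s`: the winner is the candidate that is first in the
lexicographic tie-breaking order (i.e. has the least index) among those of maximal score. -/
def winner {m n : ℕ} [NeZero m] (s : Fin m → ℕ) (P : Fin n → Pref m) : Fin m :=
  (Finset.univ.filter fun c => ∀ d, score s P d ≤ score s P c).min' (by
    obtain ⟨c, -, hc⟩ := Finset.exists_max_image Finset.univ (score s P) Finset.univ_nonempty
    exact ⟨c, Finset.mem_filter.mpr ⟨Finset.mem_univ c, fun d => hc d (Finset.mem_univ d)⟩⟩)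

/-- `k`-approval, `α_k`: one point for each of the top `k` positions. -/
def approval (m n k : ℕ) [NeZero m] : Rule m n :=
  winner (fun r => if (r : ℕ) < k then 1 else 0)

/-- `k`-Borda, `β_k`: `max (0, k - r + 1)` points for (`1`-indexed) position `r`, i.e. `k - r`
(truncated subtraction) points for `0`-indexed position `r`. -/
def kBorda (m n k : ℕ) [NeZero m] : Rule m n :=
  winner (fun r => k - (r : ℕ))

/-- `f` is manipulable at profile `P`: some voter `v` can misreport some preference `Q` and
obtain an outcome strictly preferred (by `v`'s true preferences) to the sincere outcome. -/
def Manipulable {m n : ℕ} (f : Rule m n) (P : Fin n → Pref m) : Prop :=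
  ∃ (v : Fin n) (Q : Pref m), P v (f (Function.update P v Q)) < P v (f P)

/-- `f ≥_PS g` : every profile at which `g` is manipulable is one at which `f` is manipulable. -/
def MoreManip {m n : ℕ} (f g : Rule m n) : Prop :=
  ∀ P : Fin n → Pref m, Manipulable g P → Manipulable f P

-- infrastructure
noncomputable def mkPref (m : ℕ) (f : ℕ → ℕ) (hf : ∀ c, c < m → f c < m)
    (hinj : ∀ a, a < m → ∀ b, b < m → f a = f b → a = b) : Pref m :=
  Equiv.ofBijective (fun c => ⟨f c.1, hf c.1 c.2⟩)
    (Finite.injective_iff_bijective.mp fun a b hab =>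
      Fin.ext (hinj _ a.2 _ b.2 (congrArg Fin.val hab)))

lemma mkPref_apply (m : ℕ) (f : ℕ → ℕ) (hf : ∀ c, c < m → f c < m)
    (hinj : ∀ a, a < m → ∀ b, b < m → f a = f b → a = b) (c : Fin m) :
    ((mkPref m f hf hinj) c : ℕ) = f c.1 := rfl

lemma sum_ite_one {n : ℕ} (v0 : Fin n) (a b : ℕ) :
    ∑ v : Fin n, (if v = v0 then a else b) = a + (n - 1) * b := by
  rw [← Finset.add_sum_erase _ _ (Finset.mem_univ v0), if_pos rfl]
  congr 1
  rw [Finset.sum_congr rfl (fun v hv => if_neg (Finset.mem_erase.mp hv).1),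
    Finset.sum_const, Finset.card_erase_of_mem (Finset.mem_univ v0), Finset.card_univ,
    Fintype.card_fin, smul_eq_mul]

lemma sum_ite_two {n : ℕ} (v0 v1 : Fin n) (h : v0 ≠ v1) (a q b : ℕ) :
    ∑ v : Fin n, (if v = v0 then a else if v = v1 then q else b) = a + q + (n - 2) * b := by
  rw [← Finset.add_sum_erase _ _ (Finset.mem_univ v0), if_pos rfl]
  have hv1 : v1 ∈ Finset.univ.erase v0 := Finset.mem_erase.mpr ⟨h.symm, Finset.mem_univ _⟩
  rw [← Finset.add_sum_erase _ _ hv1, if_neg (fun hh => h hh.symm), if_pos rfl]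
  have : ∀ v ∈ (Finset.univ.erase v0).erase v1, (if v = v0 then a else if v = v1 then q else b) = b := by
    intro v hv
    rw [if_neg (Finset.mem_erase.mp (Finset.mem_erase.mp hv).2).1, if_neg (Finset.mem_erase.mp hv).1]
  rw [Finset.sum_congr rfl this, Finset.sum_const,
    Finset.card_erase_of_mem hv1, Finset.card_erase_of_mem (Finset.mem_univ v0),
    Finset.card_univ, Fintype.card_fin, smul_eq_mul, add_assoc, Nat.sub_sub]

lemma le_score_winner {m n : ℕ} [NeZero m] (s : Fin m → ℕ) (P : Fin n → Pref m) (d : Fin m) :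
    score s P d ≤ score s P (winner s P) := by
  have := Finset.min'_mem (Finset.univ.filter fun c => ∀ d, score s P d ≤ score s P c)
    (by obtain ⟨c, -, hc⟩ := Finset.exists_max_image Finset.univ (score s P) Finset.univ_nonempty
        exact ⟨c, Finset.mem_filter.mpr ⟨Finset.mem_univ c, fun d => hc d (Finset.mem_univ d)⟩⟩)
  exact (Finset.mem_filter.mp this).2 d

lemma winner_le {m n : ℕ} [NeZero m] (s : Fin m → ℕ) (P : Fin n → Pref m) (d : Fin m)
    (hd : ∀ e, score s P e ≤ score s P d) : winner s P ≤ d :=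
  Finset.min'_le _ _ (Finset.mem_filter.mpr ⟨Finset.mem_univ _, hd⟩)

lemma winner_eq {m n : ℕ} [NeZero m] (s : Fin m → ℕ) (P : Fin n → Pref m) (c : Fin m)
    (hmax : ∀ d, score s P d ≤ score s P c)
    (hlt : ∀ d, d < c → score s P d < score s P c) : winner s P = c := by
  have h1 := winner_le s P c hmax
  rcases lt_or_eq_of_le h1 with h | h
  · exact absurd (le_score_winner s P c) (not_le.mpr (hlt _ h))
  · exact h

lemma score_AB {m n : ℕ} [NeZero n] (s : Fin m → ℕ) (A B : Pref m) (c : Fin m) :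
    score s (fun u : Fin n => if u = 0 then A else B) c = s (A c) + (n - 1) * s (B c) := by
  unfold score
  refine Eq.trans (Finset.sum_congr rfl fun v _ => ?_) (sum_ite_one 0 (s (A c)) (s (B c)))
  by_cases hv : v = 0 <;> simp [hv]

lemma score_upd_ne {m n : ℕ} [NeZero n] (s : Fin m → ℕ) (A B Q : Pref m) {v : Fin n}
    (hv : v ≠ 0) (c : Fin m) :
    score s (Function.update (fun u : Fin n => if u = 0 then A else B) v Q) c
      = s (Q c) + s (A c) + (n - 2) * s (B c) := by
  unfold score
  refine Eq.trans (Finset.sum_congr rfl fun u _ => ?_) (sum_ite_two v 0 hv (s (Q c)) (s (A c)) (s (B c)))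
  by_cases h1 : u = v <;> by_cases h2 : u = 0 <;>
    simp [Function.update_apply, h1, h2, hv, (Ne.symm hv : (0:Fin n) ≠ v)]

lemma score_upd_zero {m n : ℕ} [NeZero n] (s : Fin m → ℕ) (A B Q : Pref m) (c : Fin m) :
    score s (Function.update (fun u : Fin n => if u = 0 then A else B) (0 : Fin n) Q) c
      = s (Q c) + (n - 1) * s (B c) := by
  unfold score
  refine Eq.trans (Finset.sum_congr rfl fun u _ => ?_) (sum_ite_one 0 (s (Q c)) (s (B c)))
  by_cases h2 : u = 0 <;> simp [Function.update_apply, h2]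

lemma card_val_Ico (m a b : ℕ) (hb : b ≤ m) :
    (Finset.univ.filter fun r : Fin m => a ≤ (r : ℕ) ∧ (r : ℕ) < b).card = b - a := by
  rw [← Nat.card_Ico a b]
  exact Finset.card_bij' (fun (r : Fin m) _ => (r : ℕ))
    (fun x hx => (⟨x, lt_of_lt_of_le (Finset.mem_Ico.mp hx).2 hb⟩ : Fin m))
    (fun r hr => Finset.mem_Ico.mpr (Finset.mem_filter.mp hr).2)
    (fun x hx => Finset.mem_filter.mpr ⟨Finset.mem_univ _, (Finset.mem_Ico.mp hx).1, (Finset.mem_Ico.mp hx).2⟩)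
    (fun r hr => rfl) (fun x hx => rfl)

lemma card_filter_comp {m : ℕ} (Q : Pref m) (p : Fin m → Prop) [DecidablePred p] :
    (Finset.univ.filter fun d => p (Q d)).card = (Finset.univ.filter p).card := by
  exact Finset.card_bij' (fun d _ => Q d) (fun r _ => Q.symm r)
    (fun d hd => Finset.mem_filter.mpr ⟨Finset.mem_univ _, (Finset.mem_filter.mp hd).2⟩)
    (fun r hr => Finset.mem_filter.mpr ⟨Finset.mem_univ _, by simpa using (Finset.mem_filter.mp hr).2⟩)
    (fun d hd => by simp) (fun r hr => by simp)

lemma exists_approved {m j : ℕ} (hj : j ≤ m) (Q : Pref m) (S : Finset (Fin m))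
    (hcard : m - j < S.card) : ∃ d ∈ S, ((Q d : Fin m) : ℕ) < j := by
  by_contra hcon
  push_neg at hcon
  have hsub : S ⊆ Finset.univ.filter fun d => ¬ ((Q d : Fin m) : ℕ) < j := by
    intro d hd; exact Finset.mem_filter.mpr ⟨Finset.mem_univ _, not_lt.mpr (hcon d hd)⟩
  have h1 : (Finset.univ.filter fun d => ¬ ((Q d : Fin m) : ℕ) < j).card = m - j := by
    rw [card_filter_comp Q (fun r => ¬ (r : ℕ) < j)]
    have h2 : (Finset.univ.filter fun r : Fin m => ((r : ℕ) < j)).card = j := by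
      have := card_val_Ico m 0 j hj
      simpa using this
    have h3 := Finset.card_filter_add_card_filter_not (s := Finset.univ)
      (p := fun r : Fin m => (r : ℕ) < j)
    rw [h2, Finset.card_univ, Fintype.card_fin] at h3
    omega
  have := Finset.card_le_card hsub
  omega

set_option maxHeartbeats 1000000 in
lemma caseC1 (m n i j : ℕ) [NeZero m] [NeZero n] (hi : 2 ≤ i) (hij : i < j)
    (hn : 2 ≤ n) (hjm : j + 1 ≤ m) (hcase : m + 2 ≤ 2 * j) :
    ∃ P : Fin n → Pref m,
      Manipulable (approval m n i) P ∧ ¬ Manipulable (approval m n j) P := by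
  have hL2 : 2 ≤ m - j + 1 := by omega
  have hLj : m - j + 1 + 1 ≤ j := by omega
  obtain ⟨A, hA⟩ : ∃ A : Pref m, ∀ c : Fin m, ((A c : Fin m) : ℕ) =
      (if (c : ℕ) = 0 then 0 else if (c : ℕ) = m - j + 1 then 1
       else if (c : ℕ) < m - j + 1 then (c : ℕ) + 1 else (c : ℕ)) :=
    ⟨mkPref m (fun c => if c = 0 then 0 else if c = m - j + 1 then 1
        else if c < m - j + 1 then c + 1 else c)
      (by intro a ha; split_ifs <;> first | exact ‹False›.elim | omega)
      (by intro a ha b hb h; split_ifs at h <;> omega), fun c => rfl⟩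
  obtain ⟨B, hB⟩ : ∃ B : Pref m, ∀ c : Fin m, ((B c : Fin m) : ℕ) =
      (if (c : ℕ) = m - j + 1 then 0
       else if (c : ℕ) < m - j + 1 then (c : ℕ) + 1 else (c : ℕ)) :=
    ⟨mkPref m (fun c => if c = m - j + 1 then 0 else if c < m - j + 1 then c + 1 else c)
      (by intro a ha; split_ifs <;> first | exact ‹False›.elim | omega)
      (by intro a ha b hb h; split_ifs at h <;> omega), fun c => rfl⟩
  obtain ⟨Qp, hQp⟩ : ∃ Qp : Pref m, ∀ c : Fin m, ((Qp c : Fin m) : ℕ) =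
      (if (c : ℕ) = 0 then m - 1 else if (c : ℕ) < m - j + 1 then j - 2 + (c : ℕ)
       else (c : ℕ) - (m - j + 1)) :=
    ⟨mkPref m (fun c => if c = 0 then m - 1 else if c < m - j + 1 then j - 2 + c
        else c - (m - j + 1))
      (by intro a ha; split_ifs <;> first | exact ‹False›.elim | omega)
      (by intro a ha b hb h; split_ifs at h <;> omega), fun c => rfl⟩
  obtain ⟨t0, ht0⟩ : ∃ t : Fin m, (t : ℕ) = 0 := ⟨⟨0, by omega⟩, rfl⟩
  obtain ⟨tL, htL⟩ : ∃ t : Fin m, (t : ℕ) = m - j + 1 := ⟨⟨m - j + 1, by omega⟩, rfl⟩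
  obtain ⟨v1, hv1⟩ : ∃ v : Fin n, (v : ℕ) = 1 := ⟨⟨1, by omega⟩, rfl⟩
  have hv1ne : v1 ≠ 0 := by
    intro h; rw [h, Fin.val_zero] at hv1; exact absurd hv1 (by omega)
  have bnd : ∀ (k : ℕ) (r : Fin m), (if (r : ℕ) < k then 1 else 0) ≤ 1 :=
    fun k r => by split_ifs <;> first | exact ‹False›.elim | omega
  have bnd2 : ∀ (t k : ℕ) (r : Fin m), t * (if (r : ℕ) < k then 1 else 0) ≤ t :=
    fun t k r => by split_ifs <;> simp
  have hwin : ∀ k : ℕ, 2 ≤ k → winner (fun r : Fin m => if (r : ℕ) < k then 1 else 0)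
      (fun u : Fin n => if u = 0 then A else B) = t0 := by
    intro k hk
    have hst : score (fun r : Fin m => if (r : ℕ) < k then 1 else 0)
        (fun u : Fin n => if u = 0 then A else B) t0 = n := by
      rw [score_AB]
      simp only [hA, hB, ht0]
      split_ifs <;> first | exact ‹False›.elim | (simp only [Nat.mul_one, Nat.mul_zero]; try omega)
    apply winner_eq
    · intro d
      have hub : score (fun r : Fin m => if (r : ℕ) < k then 1 else 0)
          (fun u : Fin n => if u = 0 then A else B) d ≤ n := by
        rw [score_AB]
        have b1 := bnd k (A d)
        have b2 := bnd2 (n - 1) k (B d)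
        omega
      omega
    · intro d hd
      rw [Fin.lt_def, ht0] at hd
      exact absurd hd (Nat.not_lt_zero _)
  refine ⟨fun u : Fin n => if u = 0 then A else B, ?_, ?_⟩
  · -- Manipulable under i-approval
    have hst : score (fun r : Fin m => if (r : ℕ) < i then 1 else 0)
        (Function.update (fun u : Fin n => if u = 0 then A else B) v1 Qp) tL = n := by
      rw [score_upd_ne _ _ _ _ hv1ne]
      simp only [hA, hB, hQp, htL]
      split_ifs <;> first | exact ‹False›.elim | (simp only [Nat.mul_one, Nat.mul_zero]; try omega)
    have hwin' : winner (fun r : Fin m => if (r : ℕ) < i then 1 else 0)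
        (Function.update (fun u : Fin n => if u = 0 then A else B) v1 Qp) = tL := by
      apply winner_eq
      · intro d
        have hub : score (fun r : Fin m => if (r : ℕ) < i then 1 else 0)
            (Function.update (fun u : Fin n => if u = 0 then A else B) v1 Qp) d ≤ n := by
          rw [score_upd_ne _ _ _ _ hv1ne]
          have b1 := bnd i (Qp d)
          have b2 := bnd i (A d)
          have b3 := bnd2 (n - 2) i (B d)
          omega
        omega
      · intro d hd
        rw [Fin.lt_def, htL] at hd
        have hub : score (fun r : Fin m => if (r : ℕ) < i then 1 else 0)
            (Function.update (fun u : Fin n => if u = 0 then A else B) v1 Qp) d ≤ n - 1 := by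
          rw [score_upd_ne _ _ _ _ hv1ne]
          have b2 := bnd i (A d)
          have b3 := bnd2 (n - 2) i (B d)
          have b1 : (if ((Qp d : Fin m) : ℕ) < i then 1 else 0) = 0 := by
            rw [hQp]
            split_ifs <;> first | exact ‹False›.elim | omega
          omega
        omega
    simp only [Manipulable, approval]
    refine ⟨v1, Qp, ?_⟩
    rw [hwin i hi, hwin']
    simp only [if_neg hv1ne, Fin.lt_def, hB, ht0, htL]
    split_ifs <;> first | exact ‹False›.elim | omega
  · -- Not manipulable under j-approval
    intro hMan
    simp only [Manipulable, approval] at hMan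
    obtain ⟨v, Q, hlt⟩ := hMan
    rw [hwin j (by omega)] at hlt
    by_cases hv : v = 0
    · rw [hv, if_pos rfl] at hlt
      have hcon := Fin.lt_def.mp hlt
      rw [hA, hA, ht0] at hcon
      split_ifs at hcon <;> first | exact ‹False›.elim | omega
    · rw [if_neg hv] at hlt
      have hlt' := Fin.lt_def.mp hlt
      rw [hB, hB, ht0] at hlt'
      have hwval : ((winner (fun r : Fin m => if (r : ℕ) < j then 1 else 0)
          (Function.update (fun u : Fin n => if u = 0 then A else B) v Q) : Fin m) : ℕ)
          = m - j + 1 := by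
        split_ifs at hlt' <;> first | exact ‹False›.elim | omega
      obtain ⟨d, hdS, hdQ⟩ := exists_approved (by omega : j ≤ m) Q
        (Finset.univ.filter fun r : Fin m => 0 ≤ (r : ℕ) ∧ (r : ℕ) < m - j + 1)
        (by rw [card_val_Ico m 0 (m - j + 1) (by omega)]; omega)
      have hd : (d : ℕ) < m - j + 1 := (Finset.mem_filter.mp hdS).2.2
      have hscd : score (fun r : Fin m => if (r : ℕ) < j then 1 else 0)
          (Function.update (fun u : Fin n => if u = 0 then A else B) v Q) d = n := by
        rw [score_upd_ne _ _ _ _ hv]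
        have h1 : (if ((Q d : Fin m) : ℕ) < j then 1 else 0) = 1 := if_pos hdQ
        rw [h1, hA, hB]
        split_ifs <;> first | exact ‹False›.elim | (simp only [Nat.mul_one, Nat.mul_zero]; try omega)
      have hle := winner_le (fun r : Fin m => if (r : ℕ) < j then 1 else 0)
        (Function.update (fun u : Fin n => if u = 0 then A else B) v Q) d
        (fun e => by
          have hub : score (fun r : Fin m => if (r : ℕ) < j then 1 else 0)
              (Function.update (fun u : Fin n => if u = 0 then A else B) v Q) e ≤ n := by
            rw [score_upd_ne _ _ _ _ hv]
            have b1 := bnd j (Q e)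
            have b2 := bnd j (A e)
            have b3 := bnd2 (n - 2) j (B e)
            omega
          omega)
      have := Fin.le_def.mp hle
      omega

set_option maxHeartbeats 1000000 in
lemma caseC2a (m n i j : ℕ) [NeZero m] [NeZero n] (hi : 2 ≤ i) (hij : i < j)
    (hn : 3 ≤ n) (hjm : j + 1 ≤ m) (hcase : m + 1 = 2 * j) :
    ∃ P : Fin n → Pref m,
      Manipulable (approval m n i) P ∧ ¬ Manipulable (approval m n j) P := by
  obtain ⟨A, hA⟩ : ∃ A : Pref m, ∀ c : Fin m, ((A c : Fin m) : ℕ) = (c : ℕ) :=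
    ⟨Equiv.refl _, fun c => rfl⟩
  obtain ⟨B, hB⟩ : ∃ B : Pref m, ∀ c : Fin m, ((B c : Fin m) : ℕ) =
      (if (c : ℕ) = j then 0 else if (c : ℕ) = j - 1 then 1
       else if j + 1 ≤ (c : ℕ) then (c : ℕ) - j + 1 else (c : ℕ) + j) :=
    ⟨mkPref m (fun c => if c = j then 0 else if c = j - 1 then 1
        else if j + 1 ≤ c then c - j + 1 else c + j)
      (by intro a ha; split_ifs <;> omega)
      (by intro a ha b hb h; split_ifs at h <;> omega), fun c => rfl⟩
  obtain ⟨Qp, hQp⟩ : ∃ Qp : Pref m, ∀ c : Fin m, ((Qp c : Fin m) : ℕ) =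
      (if j ≤ (c : ℕ) then (c : ℕ) - j else (c : ℕ) + j - 1) :=
    ⟨mkPref m (fun c => if j ≤ c then c - j else c + j - 1)
      (by intro a ha; split_ifs <;> omega)
      (by intro a ha b hb h; split_ifs at h <;> omega), fun c => rfl⟩
  obtain ⟨tj1, htj1⟩ : ∃ t : Fin m, (t : ℕ) = j - 1 := ⟨⟨j - 1, by omega⟩, rfl⟩
  obtain ⟨tj, htj⟩ : ∃ t : Fin m, (t : ℕ) = j := ⟨⟨j, by omega⟩, rfl⟩
  obtain ⟨v1, hv1⟩ : ∃ v : Fin n, (v : ℕ) = 1 := ⟨⟨1, by omega⟩, rfl⟩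
  have hv1ne : v1 ≠ 0 := by
    intro h; rw [h, Fin.val_zero] at hv1; exact absurd hv1 (by omega)
  have bnd : ∀ (k : ℕ) (r : Fin m), (if (r : ℕ) < k then 1 else 0) ≤ 1 :=
    fun k r => by split_ifs <;> omega
  have bnd2 : ∀ (t k : ℕ) (r : Fin m), t * (if (r : ℕ) < k then 1 else 0) ≤ t :=
    fun t k r => by split_ifs <;> simp
  -- sincere winner is tj1 (candidate j-1) for every k-approval with 2 ≤ k ≤ j
  have hwin : ∀ k : ℕ, 2 ≤ k → k ≤ j → winner (fun r : Fin m => if (r : ℕ) < k then 1 else 0)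
      (fun u : Fin n => if u = 0 then A else B) = tj1 := by
    intro k hk hkj
    have hst : score (fun r : Fin m => if (r : ℕ) < k then 1 else 0)
        (fun u : Fin n => if u = 0 then A else B) tj1
        = (if j - 1 < k then 1 else 0) + (n - 1) := by
      rw [score_AB]
      simp only [hA, hB, htj1]
      split_ifs <;> first | exact ‹False›.elim | (simp only [Nat.mul_one, Nat.mul_zero]; try omega)
    apply winner_eq
    · intro d
      have hub : score (fun r : Fin m => if (r : ℕ) < k then 1 else 0)
          (fun u : Fin n => if u = 0 then A else B) d
          ≤ (if j - 1 < k then 1 else 0) + (n - 1) := by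
        rw [score_AB]
        simp only [hA, hB]
        split_ifs <;> first | exact ‹False›.elim | (simp only [Nat.mul_one, Nat.mul_zero]; try omega)
      omega
    · intro d hd
      rw [Fin.lt_def, htj1] at hd
      have hub : score (fun r : Fin m => if (r : ℕ) < k then 1 else 0)
          (fun u : Fin n => if u = 0 then A else B) d ≤ 1 := by
        rw [score_AB]
        simp only [hA, hB]
        split_ifs <;> first | exact ‹False›.elim | (simp only [Nat.mul_one, Nat.mul_zero]; try omega)
      omega
  refine ⟨fun u : Fin n => if u = 0 then A else B, ?_, ?_⟩
  · -- Manipulable under i-approval: voter v1 reports Qp, making candidate j win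
    have hst : score (fun r : Fin m => if (r : ℕ) < i then 1 else 0)
        (Function.update (fun u : Fin n => if u = 0 then A else B) v1 Qp) tj = n - 1 := by
      rw [score_upd_ne _ _ _ _ hv1ne]
      simp only [hA, hB, hQp, htj]
      split_ifs <;> first | exact ‹False›.elim | (simp only [Nat.mul_one, Nat.mul_zero]; try omega)
    have hwin' : winner (fun r : Fin m => if (r : ℕ) < i then 1 else 0)
        (Function.update (fun u : Fin n => if u = 0 then A else B) v1 Qp) = tj := by
      apply winner_eq
      · intro d
        have hub : score (fun r : Fin m => if (r : ℕ) < i then 1 else 0)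
            (Function.update (fun u : Fin n => if u = 0 then A else B) v1 Qp) d ≤ n - 1 := by
          rw [score_upd_ne _ _ _ _ hv1ne]
          simp only [hA, hB, hQp]
          split_ifs <;> first | exact ‹False›.elim | (simp only [Nat.mul_one, Nat.mul_zero]; try omega)
        omega
      · intro d hd
        rw [Fin.lt_def, htj] at hd
        have hub : score (fun r : Fin m => if (r : ℕ) < i then 1 else 0)
            (Function.update (fun u : Fin n => if u = 0 then A else B) v1 Qp) d ≤ n - 2 := by
          rw [score_upd_ne _ _ _ _ hv1ne]
          simp only [hA, hB, hQp]
          split_ifs <;> first | exact ‹False›.elim | (simp only [Nat.mul_one, Nat.mul_zero]; try omega)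
        omega
    simp only [Manipulable, approval]
    refine ⟨v1, Qp, ?_⟩
    rw [hwin i hi (by omega), hwin']
    simp only [if_neg hv1ne, Fin.lt_def, hB, htj, htj1]
    split_ifs <;> first | exact ‹False›.elim | omega
  · -- Not manipulable under j-approval
    intro hMan
    simp only [Manipulable, approval] at hMan
    obtain ⟨v, Q, hlt⟩ := hMan
    rw [hwin j (by omega) le_rfl] at hlt
    by_cases hv : v = 0
    · rw [hv, if_pos rfl] at hlt
      have hw' := Fin.lt_def.mp hlt
      rw [hA, hA, htj1] at hw'
      -- the deviated winner w' has value < j - 1, but its score is at most 1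
      -- while candidate j-1 keeps score ≥ n-1 ≥ 2
      have h1 := le_score_winner (fun r : Fin m => if (r : ℕ) < j then 1 else 0)
        (Function.update (fun u : Fin n => if u = 0 then A else B) (0 : Fin n) Q) tj1
      have hub : score (fun r : Fin m => if (r : ℕ) < j then 1 else 0)
          (Function.update (fun u : Fin n => if u = 0 then A else B) (0 : Fin n) Q)
          (winner (fun r : Fin m => if (r : ℕ) < j then 1 else 0)
            (Function.update (fun u : Fin n => if u = 0 then A else B) (0 : Fin n) Q)) ≤ 1 := by
        rw [score_upd_zero]
        have b1 := bnd j (Q (winner (fun r : Fin m => if (r : ℕ) < j then 1 else 0)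
          (Function.update (fun u : Fin n => if u = 0 then A else B) (0 : Fin n) Q)))
        have b2 : (n - 1) * (if ((B (winner (fun r : Fin m => if (r : ℕ) < j then 1 else 0)
            (Function.update (fun u : Fin n => if u = 0 then A else B) (0 : Fin n) Q)) : Fin m) : ℕ)
            < j then 1 else 0) = 0 := by
          rw [hB]
          split_ifs <;> first | exact ‹False›.elim | omega
        omega
      have hlow : n - 1 ≤ score (fun r : Fin m => if (r : ℕ) < j then 1 else 0)
          (Function.update (fun u : Fin n => if u = 0 then A else B) (0 : Fin n) Q) tj1 := by
        rw [score_upd_zero]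
        have b2 : (n - 1) * (if ((B tj1 : Fin m) : ℕ) < j then 1 else 0) = n - 1 := by
          rw [hB, htj1]
          split_ifs <;> first | exact ‹False›.elim | (simp only [Nat.mul_one, Nat.mul_zero]; try omega)
        omega
      omega
    · rw [if_neg hv] at hlt
      have hlt' := Fin.lt_def.mp hlt
      rw [hB, hB, htj1] at hlt'
      have hwval : ((winner (fun r : Fin m => if (r : ℕ) < j then 1 else 0)
          (Function.update (fun u : Fin n => if u = 0 then A else B) v Q) : Fin m) : ℕ) = j := by
        split_ifs at hlt' <;> first | exact ‹False›.elim | omega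
      -- candidate j-1 blocks: its score is always ≥ n-1, while j's score is ≤ n-1;
      -- so j-1 is also a maximal scorer, contradicting that the winner is j > j-1
      have hlow : n - 1 ≤ score (fun r : Fin m => if (r : ℕ) < j then 1 else 0)
          (Function.update (fun u : Fin n => if u = 0 then A else B) v Q) tj1 := by
        rw [score_upd_ne _ _ _ _ hv]
        have b1 : (if ((A tj1 : Fin m) : ℕ) < j then 1 else 0) = 1 := by
          rw [hA, htj1]; split_ifs <;> first | exact ‹False›.elim | omega
        have b2 : (n - 2) * (if ((B tj1 : Fin m) : ℕ) < j then 1 else 0) = n - 2 := by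
          rw [hB, htj1]
          split_ifs <;> first | exact ‹False›.elim | (simp only [Nat.mul_one, Nat.mul_zero]; try omega)
        omega
      have hmaxe : ∀ e : Fin m, score (fun r : Fin m => if (r : ℕ) < j then 1 else 0)
          (Function.update (fun u : Fin n => if u = 0 then A else B) v Q) e
          ≤ score (fun r : Fin m => if (r : ℕ) < j then 1 else 0)
            (Function.update (fun u : Fin n => if u = 0 then A else B) v Q) tj1 := by
        intro e
        by_cases he : (e : ℕ) = j - 1
        · have : e = tj1 := Fin.ext (by omega)
          rw [this]
        · have hub : score (fun r : Fin m => if (r : ℕ) < j then 1 else 0)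
              (Function.update (fun u : Fin n => if u = 0 then A else B) v Q) e ≤ n - 1 := by
            rw [score_upd_ne _ _ _ _ hv]
            have b1 := bnd j (Q e)
            simp only [hA, hB]
            split_ifs <;> first | exact ‹False›.elim | (simp only [Nat.mul_one, Nat.mul_zero]; try omega)
          omega
      have hle := winner_le (fun r : Fin m => if (r : ℕ) < j then 1 else 0)
        (Function.update (fun u : Fin n => if u = 0 then A else B) v Q) tj1 hmaxe
      have := Fin.le_def.mp hle
      omega

set_option maxHeartbeats 1000000 in
lemma caseC2b (m i j : ℕ) [NeZero m] (hi : 2 ≤ i) (hij : i < j)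
    (hjm : j + 1 ≤ m) (hcase : m + 1 = 2 * j) :
    ∃ P : Fin 2 → Pref m,
      Manipulable (approval m 2 i) P ∧ ¬ Manipulable (approval m 2 j) P := by
  obtain ⟨A, hA⟩ : ∃ A : Pref m, ∀ c : Fin m, ((A c : Fin m) : ℕ) = (c : ℕ) :=
    ⟨Equiv.refl _, fun c => rfl⟩
  obtain ⟨B, hB⟩ : ∃ B : Pref m, ∀ c : Fin m, ((B c : Fin m) : ℕ) =
      (if (c : ℕ) = 0 then j else if (c : ℕ) ≤ j then (c : ℕ) - 1 else (c : ℕ)) :=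
    ⟨mkPref m (fun c => if c = 0 then j else if c ≤ j then c - 1 else c)
      (by intro a ha; split_ifs <;> omega)
      (by intro a ha b hb h; split_ifs at h <;> omega), fun c => rfl⟩
  obtain ⟨Qp, hQp⟩ : ∃ Qp : Pref m, ∀ c : Fin m, ((Qp c : Fin m) : ℕ) =
      (if (c : ℕ) = 0 then 0 else if i + 1 ≤ (c : ℕ) ∧ (c : ℕ) ≤ 2 * i - 1 then (c : ℕ) - i
       else if (c : ℕ) ≤ i then (c : ℕ) + i - 1 else (c : ℕ)) :=
    ⟨mkPref m (fun c => if c = 0 then 0 else if i + 1 ≤ c ∧ c ≤ 2 * i - 1 then c - i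
        else if c ≤ i then c + i - 1 else c)
      (by intro a ha; split_ifs <;> omega)
      (by intro a ha b hb h; split_ifs at h <;> omega), fun c => rfl⟩
  obtain ⟨t0, ht0⟩ : ∃ t : Fin m, (t : ℕ) = 0 := ⟨⟨0, by omega⟩, rfl⟩
  obtain ⟨t1, ht1⟩ : ∃ t : Fin m, (t : ℕ) = 1 := ⟨⟨1, by omega⟩, rfl⟩
  have bnd : ∀ (k : ℕ) (r : Fin m), (if (r : ℕ) < k then 1 else 0) ≤ 1 :=
    fun k r => by split_ifs <;> omega
  -- sincere winner is candidate 1 for every k-approval with 2 ≤ k ≤ j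
  have hwin : ∀ k : ℕ, 2 ≤ k → k ≤ j → winner (fun r : Fin m => if (r : ℕ) < k then 1 else 0)
      (fun u : Fin 2 => if u = 0 then A else B) = t1 := by
    intro k hk hkj
    have hst : score (fun r : Fin m => if (r : ℕ) < k then 1 else 0)
        (fun u : Fin 2 => if u = 0 then A else B) t1 = 2 := by
      rw [score_AB]
      simp only [hA, hB, ht1]
      split_ifs <;> first | exact ‹False›.elim | (simp only [Nat.mul_one, Nat.mul_zero]; try omega)
    apply winner_eq
    · intro d
      have hub : score (fun r : Fin m => if (r : ℕ) < k then 1 else 0)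
          (fun u : Fin 2 => if u = 0 then A else B) d ≤ 2 := by
        rw [score_AB]
        have b1 := bnd k (A d)
        have b2 := bnd k (B d)
        omega
      omega
    · intro d hd
      rw [Fin.lt_def, ht1] at hd
      have hub : score (fun r : Fin m => if (r : ℕ) < k then 1 else 0)
          (fun u : Fin 2 => if u = 0 then A else B) d ≤ 1 := by
        rw [score_AB]
        simp only [hA, hB]
        split_ifs <;> first | exact ‹False›.elim | (simp only [Nat.mul_one, Nat.mul_zero]; try omega)
      omega
  refine ⟨fun u : Fin 2 => if u = 0 then A else B, ?_, ?_⟩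
  · -- Manipulable under i-approval: voter 0 reports Qp, making candidate 0 win
    have hst : score (fun r : Fin m => if (r : ℕ) < i then 1 else 0)
        (Function.update (fun u : Fin 2 => if u = 0 then A else B) (0 : Fin 2) Qp) t0 = 1 := by
      rw [score_upd_zero]
      simp only [hB, hQp, ht0]
      split_ifs <;> first | exact ‹False›.elim | (simp only [Nat.mul_one, Nat.mul_zero]; try omega)
    have hwin' : winner (fun r : Fin m => if (r : ℕ) < i then 1 else 0)
        (Function.update (fun u : Fin 2 => if u = 0 then A else B) (0 : Fin 2) Qp) = t0 := by
      apply winner_eq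
      · intro d
        have hub : score (fun r : Fin m => if (r : ℕ) < i then 1 else 0)
            (Function.update (fun u : Fin 2 => if u = 0 then A else B) (0 : Fin 2) Qp) d ≤ 1 := by
          rw [score_upd_zero]
          simp only [hB, hQp]
          split_ifs <;> first | exact ‹False›.elim | (simp only [Nat.mul_one, Nat.mul_zero]; try omega)
        omega
      · intro d hd
        rw [Fin.lt_def, ht0] at hd
        exact absurd hd (Nat.not_lt_zero _)
    simp only [Manipulable, approval]
    refine ⟨(0 : Fin 2), Qp, ?_⟩
    rw [hwin i hi (by omega), hwin']
    simp only [eq_self_iff_true, ite_true, Fin.lt_def, hA, ht0, ht1]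
    omega
  · -- Not manipulable under j-approval
    intro hMan
    simp only [Manipulable, approval] at hMan
    obtain ⟨v, Q, hlt⟩ := hMan
    rw [hwin j (by omega) le_rfl] at hlt
    by_cases hv : v = 0
    · rw [hv, if_pos rfl] at hlt
      have hw' := Fin.lt_def.mp hlt
      rw [hA, hA, ht1] at hw'
      -- deviated winner has value 0, but some candidate in [1,j] approved by Q has score 2
      obtain ⟨d, hdS, hdQ⟩ := exists_approved (by omega : j ≤ m) Q
        (Finset.univ.filter fun r : Fin m => 1 ≤ (r : ℕ) ∧ (r : ℕ) < j + 1)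
        (by rw [card_val_Ico m 1 (j + 1) (by omega)]; omega)
      have hd := (Finset.mem_filter.mp hdS).2
      have hscd : score (fun r : Fin m => if (r : ℕ) < j then 1 else 0)
          (Function.update (fun u : Fin 2 => if u = 0 then A else B) (0 : Fin 2) Q) d = 2 := by
        rw [hv] at *
        rw [score_upd_zero]
        have h1 : (if ((Q d : Fin m) : ℕ) < j then 1 else 0) = 1 := if_pos hdQ
        rw [h1, hB]
        split_ifs <;> first | exact ‹False›.elim | (simp only [Nat.mul_one, Nat.mul_zero]; try omega)
      have h1 := le_score_winner (fun r : Fin m => if (r : ℕ) < j then 1 else 0)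
        (Function.update (fun u : Fin 2 => if u = 0 then A else B) (0 : Fin 2) Q) d
      have hub : score (fun r : Fin m => if (r : ℕ) < j then 1 else 0)
          (Function.update (fun u : Fin 2 => if u = 0 then A else B) (0 : Fin 2) Q)
          (winner (fun r : Fin m => if (r : ℕ) < j then 1 else 0)
            (Function.update (fun u : Fin 2 => if u = 0 then A else B) (0 : Fin 2) Q)) ≤ 1 := by
        rw [score_upd_zero]
        have b1 := bnd j (Q (winner (fun r : Fin m => if (r : ℕ) < j then 1 else 0)
          (Function.update (fun u : Fin 2 => if u = 0 then A else B) (0 : Fin 2) Q)))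
        have b2 : (1 : ℕ) * (if ((B (winner (fun r : Fin m => if (r : ℕ) < j then 1 else 0)
            (Function.update (fun u : Fin 2 => if u = 0 then A else B) (0 : Fin 2) Q)) : Fin m) : ℕ)
            < j then 1 else 0) ≤ 0 := by
          have b3 : ((B (winner (fun r : Fin m => if (r : ℕ) < j then 1 else 0)
              (Function.update (fun u : Fin 2 => if u = 0 then A else B) (0 : Fin 2) Q)) : Fin m) : ℕ)
              = j := by
            rw [hB]
            split_ifs <;> first | exact ‹False›.elim | omega
          rw [b3]
          split_ifs <;> first | exact ‹False›.elim | omega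
        omega
      omega
    · rw [if_neg hv] at hlt
      have hlt' := Fin.lt_def.mp hlt
      rw [hB, hB, ht1] at hlt'
      split_ifs at hlt' <;> first | exact ‹False›.elim | omega

/-- For `2 ≤ i < j ≤ m-1`, `n ≥ 2`, and `m < 2j`: `α_j ≱_PS α_i`. -/
theorem stmt_5 (m n i j : ℕ) [NeZero m] (hi : 2 ≤ i) (hij : i < j) (hj : j ≤ m - 1)
    (hn : 2 ≤ n) (hm : m < 2 * j) :
    ∃ P : Fin n → Pref m,
      Manipulable (approval m n i) P ∧ ¬ Manipulable (approval m n j) P := by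
  have hm1 : 1 ≤ m := Nat.pos_of_ne_zero (NeZero.ne m)
  have : NeZero n := ⟨by omega⟩
  by_cases hcase : m + 2 ≤ 2 * j
  · exact caseC1 m n i j hi hij hn (by omega) hcase
  · have hc : m + 1 = 2 * j := by omega
    by_cases hn3 : 3 ≤ n
    · exact caseC2a m n i j hi hij hn3 (by omega) hc
    · have hn2 : n = 2 := by omega
      subst hn2
      exact caseC2b m i j hi hij (by omega) hc
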